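/- Let λ_2, ..., λ_N be complex numbers with 0 < Re(λ_2) ≤ Re(λ_k) for all k, let P be a 2n×2n real symmetric positive definite matrix satisfying the algebraic Riccati equation P A0 + A0ᵀ P − P θ2 θ2ᵀ P + I = 0, and set K = Re(λ_2)⁻¹ θ2ᵀ P. Let J̃ be any (N−1)×(N−1) upper triangular complex matrix with diagonal entries λ_2, ..., λ_N. Then every eigenvalue of the matrix I_{N−1} ⊗ A0 − J̃ ⊗ θ2 K has strictly negative real part. -/

import Mathlib

open Matrix intervalIntegral

noncomputable section

/-- `θ1 = [I_n; 0]` as a `2n × n` real matrix (rows indexed by `Fin n ⊕ Fin n`). -/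
def theta1 (n : ℕ) : Matrix (Fin n ⊕ Fin n) (Fin n) ℝ :=
  Matrix.of (Sum.elim (fun i j => (1 : Matrix (Fin n) (Fin n) ℝ) i j) (fun _ _ => 0))

/-- `θ2 = [0; I_n]` as a `2n × n` real matrix. -/
def theta2 (n : ℕ) : Matrix (Fin n ⊕ Fin n) (Fin n) ℝ :=
  Matrix.of (Sum.elim (fun _ _ => 0) (fun i j => (1 : Matrix (Fin n) (Fin n) ℝ) i j))

/-- `α = [α_p I_n, α_v I_n]` as an `n × 2n` real matrix. -/
def alphaMat (n : ℕ) (αp αv : ℝ) : Matrix (Fin n) (Fin n ⊕ Fin n) ℝ :=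
  Matrix.of fun i => Sum.elim (fun j => αp * (1 : Matrix (Fin n) (Fin n) ℝ) i j)
    (fun j => αv * (1 : Matrix (Fin n) (Fin n) ℝ) i j)

/-- `A0 = θ1 θ2ᵀ + θ2 [α_p I_n, α_v I_n]`, i.e. the block matrix
`[[0, I_n], [α_p I_n, α_v I_n]]`. -/
def A0 (n : ℕ) (αp αv : ℝ) : Matrix (Fin n ⊕ Fin n) (Fin n ⊕ Fin n) ℝ :=
  theta1 n * (theta2 n)ᵀ + theta2 n * alphaMat n αp αv


set_option maxHeartbeats 1600000

open Kronecker Polynomial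

section AuxLemmas

open Complex
open scoped ComplexOrder

variable {m l p : Type*} [Fintype m] [DecidableEq m] [Fintype l] [DecidableEq l] [Fintype p]

omit [DecidableEq l] [Fintype p] in
lemma aux_eval_charpoly (M : Matrix m m ℂ) (μ : ℂ) :
    M.charpoly.eval μ = (μ • (1 : Matrix m m ℂ) - M).det := by
  rw [Matrix.charpoly, ← Polynomial.coe_evalRingHom, RingHom.map_det]
  congr 1
  ext i j
  by_cases h : i = j <;>
    simp [h, charmatrix_apply, Matrix.one_apply, Matrix.smul_apply, Matrix.sub_apply,
      Matrix.diagonal_apply]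

omit [Fintype m] [DecidableEq m] [DecidableEq l] in
lemma aux_map_mul (M : Matrix m l ℝ) (N : Matrix l p ℝ) :
    (M * N).map (Complex.ofReal ·) = M.map (Complex.ofReal ·) * N.map (Complex.ofReal ·) := by
  ext i j
  push_cast [Matrix.mul_apply, Matrix.map_apply]
  ring

omit [Fintype m] [DecidableEq m] [Fintype l] [DecidableEq l] [Fintype p] in
lemma aux_map_add (M N : Matrix m l ℝ) :
    (M + N).map (Complex.ofReal ·) = M.map (Complex.ofReal ·) + N.map (Complex.ofReal ·) := by
  ext i j; simp

omit [Fintype m] [DecidableEq m] [Fintype l] [DecidableEq l] [Fintype p] in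
lemma aux_map_sub (M N : Matrix m l ℝ) :
    (M - N).map (Complex.ofReal ·) = M.map (Complex.ofReal ·) - N.map (Complex.ofReal ·) := by
  ext i j; simp

omit [Fintype m] [Fintype l] [DecidableEq l] [Fintype p] in
lemma aux_map_one :
    ((1 : Matrix m m ℝ)).map (Complex.ofReal ·) = 1 := by
  ext i j; by_cases h : i = j <;> simp [h, Matrix.one_apply]

omit [Fintype m] [DecidableEq m] [Fintype l] [DecidableEq l] [Fintype p] in
lemma aux_map_smul (r : ℝ) (M : Matrix m l ℝ) :
    ((r • M).map (Complex.ofReal ·)) = (r : ℂ) • M.map (Complex.ofReal ·) := by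
  ext i j
  simp [Matrix.smul_apply, Complex.ofReal_mul, smul_eq_mul]

omit [Fintype m] [DecidableEq m] [Fintype l] [DecidableEq l] [Fintype p] in
lemma aux_map_conjT (M : Matrix m l ℝ) :
    (M.map (Complex.ofReal ·))ᴴ = Mᵀ.map (Complex.ofReal ·) := by
  ext i j; simp [Matrix.conjTranspose_apply, Complex.conj_ofReal]

omit [DecidableEq m] in
lemma aux_quad_eq (P : Matrix m m ℝ) (hsymm : ∀ i j, P j i = P i j) (x : m → ℂ) :
    star x ⬝ᵥ (P.map (Complex.ofReal ·)) *ᵥ x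
      = ((((fun i => (x i).re) ⬝ᵥ P *ᵥ (fun i => (x i).re)
          + (fun i => (x i).im) ⬝ᵥ P *ᵥ (fun i => (x i).im)) : ℝ) : ℂ) := by
  set u : m → ℝ := fun i => (x i).re with hu
  set w : m → ℝ := fun i => (x i).im with hw
  apply Complex.ext
  · simp only [dotProduct, mulVec, dotProduct, Matrix.map_apply, Pi.star_apply,
      Finset.mul_sum, Complex.re_sum, Complex.ofReal_re]
    rw [← Finset.sum_add_distrib]
    refine Finset.sum_congr rfl fun i _ => ?_
    rw [← Finset.sum_add_distrib]
    refine Finset.sum_congr rfl fun j _ => ?_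
    simp only [Complex.mul_re, Complex.mul_im, Complex.star_def, Complex.conj_re,
      Complex.conj_im, Complex.ofReal_re, Complex.ofReal_im, hu, hw]
    ring
  · simp only [dotProduct, mulVec, Matrix.map_apply, Pi.star_apply,
      Finset.mul_sum, Complex.im_sum, Complex.ofReal_im]
    have h1 : ∀ i j : m, (star (x i) * ((P i j : ℂ) * x j)).im
        = P i j * (u i * w j) - P i j * (w i * u j) := by
      intro i j
      simp only [Complex.mul_im, Complex.mul_re, Complex.star_def, Complex.conj_re,
        Complex.conj_im, Complex.ofReal_re, Complex.ofReal_im, hu, hw]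
      ring
    calc ∑ i : m, ∑ j : m, (star (x i) * ((P i j : ℂ) * x j)).im
        = ∑ i : m, ∑ j : m, (P i j * (u i * w j) - P i j * (w i * u j)) :=
          Finset.sum_congr rfl fun i _ => Finset.sum_congr rfl fun j _ => h1 i j
      _ = 0 := by
          simp only [Finset.sum_sub_distrib]
          rw [sub_eq_zero, Finset.sum_comm]
          exact Finset.sum_congr rfl fun i _ => Finset.sum_congr rfl fun j _ => by
            rw [hsymm]; ring

omit [DecidableEq m] in
lemma aux_posDef_map {P : Matrix m m ℝ} (hP : P.PosDef) :
    (P.map (Complex.ofReal ·)).PosDef := by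
  have hsymm : ∀ i j, P j i = P i j := fun i j => by
    have := congrFun (congrFun hP.1 i) j
    simpa [Matrix.conjTranspose_apply] using this
  rw [Matrix.posDef_iff_dotProduct_mulVec]
  constructor
  · ext i j
    simp [Matrix.conjTranspose_apply, Matrix.map_apply, Complex.conj_ofReal, hsymm i j]
  · intro x hx
    rw [aux_quad_eq P hsymm x, Complex.zero_lt_real]
    have hcase : (fun i => (x i).re) ≠ 0 ∨ (fun i => (x i).im) ≠ 0 := by
      by_contra h
      push_neg at h
      exact hx (funext fun i => Complex.ext (congrFun h.1 i) (congrFun h.2 i))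
    have h1 := hP.posSemidef.dotProduct_mulVec_nonneg (fun i => (x i).re)
    have h2 := hP.posSemidef.dotProduct_mulVec_nonneg (fun i => (x i).im)
    simp only [star_trivial] at h1 h2
    rcases hcase with h | h
    · have := hP.dotProduct_mulVec_pos h
      simp only [star_trivial] at this
      linarith
    · have := hP.dotProduct_mulVec_pos h
      simp only [star_trivial] at this
      linarith


/-- Instance-flexible version of `eval` of `charpoly`. -/
lemma aux_eval_charpoly' {m' : Type*} {dec : DecidableEq m'} {ft : Fintype m'}
    (M : Matrix m' m' ℂ) (μ : ℂ) :
    Polynomial.eval μ (@Matrix.charpoly ℂ _ m' dec ft M)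
      = @Matrix.det m' dec ft ℂ _ (@Matrix.diagonal m' ℂ dec _ (fun _ => μ) - M) := by
  letI := dec; letI := ft
  rw [Matrix.charpoly, ← Polynomial.coe_evalRingHom, RingHom.map_det]
  congr 1
  ext i j
  by_cases h : i = j <;>
    simp [h, Matrix.charmatrix_apply, Matrix.diagonal_apply, Matrix.sub_apply]

/-- Instance-flexible version of `det_submatrix_equiv_self`. -/
lemma aux_det_submatrix {l' m' : Type*} {dl : DecidableEq l'} {fl : Fintype l'}
    [DecidableEq m'] [Fintype m'] (e : l' ≃ m') (M : Matrix m' m' ℂ) :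
    @Matrix.det l' dl fl ℂ _ (M.submatrix ⇑e ⇑e) = M.det := by
  letI := dl; letI := fl
  exact Matrix.det_submatrix_equiv_self e M

/-- The canonical equivalence between `β` and the fiber of `Prod.fst` over `k`. -/
def prodSubtypeEquiv (α β : Type*) (k : α) : β ≃ {x : α × β // x.1 = k} where
  toFun i := ⟨(k, i), rfl⟩
  invFun x := x.1.2
  left_inv i := rfl
  right_inv x := Subtype.ext (Prod.ext x.2.symm rfl)

@[simp] lemma prodSubtypeEquiv_symm_apply {α β : Type*} (k : α)
    (x : {x : α × β // x.1 = k}) : (prodSubtypeEquiv α β k).symm x = (x : α × β).2 := rfl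

end AuxLemmas

open scoped ComplexOrder in
/-- stability core of Theorem 2 of the paper: let `λ_2, ..., λ_N` be
complex numbers with `0 < Re λ_2 ≤ Re λ_k`, let the real symmetric positive definite
`P` solve the Riccati equation `P A0 + A0ᵀ P - P θ2 θ2ᵀ P + I = 0`, and set
`K = (Re λ_2)⁻¹ θ2ᵀ P`.  Then for any upper triangular `J̃` with diagonal entries
`λ_2, ..., λ_N`, every eigenvalue of `I_{N-1} ⊗ A0 - J̃ ⊗ θ2 K` has strictly negative
real part. -/
theorem disagreement_dynamics_hurwitz
    (n N : ℕ) (hn : 1 ≤ n) (hN : 2 ≤ N) (αp αv : ℝ)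
    (lam : Fin (N - 1) → ℂ)
    (hre_pos : 0 < (lam ⟨0, by omega⟩).re)
    (hre_min : ∀ k, (lam ⟨0, by omega⟩).re ≤ (lam k).re)
    (P : Matrix (Fin n ⊕ Fin n) (Fin n ⊕ Fin n) ℝ) (hPsymm : P.IsSymm) (hPpos : P.PosDef)
    (hRiccati : P * A0 n αp αv + (A0 n αp αv)ᵀ * P
        - P * theta2 n * (theta2 n)ᵀ * P + 1 = 0)
    (K : Matrix (Fin n) (Fin n ⊕ Fin n) ℝ)
    (hK : K = ((lam ⟨0, by omega⟩).re)⁻¹ • ((theta2 n)ᵀ * P))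
    (J : Matrix (Fin (N - 1)) (Fin (N - 1)) ℂ)
    (hJtri : J.BlockTriangular (id : Fin (N - 1) → Fin (N - 1)))
    (hJdiag : ∀ k, J k k = lam k) :
    ∀ μ : ℂ,
      ((((1 : Matrix (Fin (N - 1)) (Fin (N - 1)) ℂ)
            ⊗ₖ ((A0 n αp αv).map (Complex.ofReal ·))
          - J ⊗ₖ ((theta2 n * K).map (Complex.ofReal ·))).charpoly).IsRoot μ)
      → μ.re < 0 := by
  intro μ hμ
  have hNpos : 0 < N - 1 := by omega
  set p0 : Fin (N - 1) := ⟨0, hNpos⟩ with hp0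
  have ha : 0 < (lam p0).re := hre_pos
  have hmin : ∀ k, (lam p0).re ≤ (lam k).re := hre_min
  have hK' : K = ((lam p0).re)⁻¹ • ((theta2 n)ᵀ * P) := hK
  set a : ℝ := (lam p0).re with ha_def
  have ha0 : a ≠ 0 := ne_of_gt ha
  -- abbreviations
  set AC : Matrix (Fin n ⊕ Fin n) (Fin n ⊕ Fin n) ℂ :=
    (A0 n αp αv).map (Complex.ofReal ·) with hACdef
  set BC : Matrix (Fin n ⊕ Fin n) (Fin n ⊕ Fin n) ℂ :=
    (theta2 n * K).map (Complex.ofReal ·) with hBCdef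
  -- Step 1 : block triangular structure
  have htri : ((1 : Matrix (Fin (N - 1)) (Fin (N - 1)) ℂ) ⊗ₖ AC
      - J ⊗ₖ BC).BlockTriangular (Prod.fst) := by
    intro i j hij
    have h1 : (1 : Matrix (Fin (N - 1)) (Fin (N - 1)) ℂ) i.1 j.1 = 0 :=
      Matrix.one_apply_ne (ne_of_gt hij)
    simp [Matrix.sub_apply, Matrix.kroneckerMap_apply, h1, hJtri hij]
  have hcp := htri.charpoly
  rw [Polynomial.IsRoot, hcp, Polynomial.eval_prod] at hμ
  obtain ⟨k, -, hk⟩ := Finset.prod_eq_zero_iff.mp hμ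
  -- Step 2 : identify the diagonal block
  set Dk : Matrix (Fin n ⊕ Fin n) (Fin n ⊕ Fin n) ℂ := AC - lam k • BC with hDkdef
  rw [aux_eval_charpoly'] at hk
  have hmat : Matrix.diagonal (fun _ => μ)
      - (((1 : Matrix (Fin (N - 1)) (Fin (N - 1)) ℂ) ⊗ₖ AC
          - J ⊗ₖ BC)).toSquareBlock Prod.fst k
      = (Matrix.diagonal (fun _ : Fin n ⊕ Fin n => μ) - Dk).submatrix
          ⇑(prodSubtypeEquiv (Fin (N - 1)) (Fin n ⊕ Fin n) k).symm
          ⇑(prodSubtypeEquiv (Fin (N - 1)) (Fin n ⊕ Fin n) k).symm := by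
    ext x y
    have hx : (x : Fin (N - 1) × (Fin n ⊕ Fin n)).1 = k := x.2
    have hy : (y : Fin (N - 1) × (Fin n ⊕ Fin n)).1 = k := y.2
    have hone : (x = y) ↔ ((x : Fin (N - 1) × (Fin n ⊕ Fin n)).2
        = (y : Fin (N - 1) × (Fin n ⊕ Fin n)).2) := by
      rw [Subtype.ext_iff, Prod.ext_iff, hx, hy]
      simp
    simp only [Matrix.sub_apply, Matrix.diagonal_apply, Matrix.submatrix_apply,
      Matrix.toSquareBlock_def, Matrix.of_apply, Matrix.kroneckerMap_apply,
      prodSubtypeEquiv_symm_apply, hDkdef, Matrix.smul_apply, smul_eq_mul, hx, hy,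
      Matrix.one_apply_eq, hJdiag]
    rw [if_congr hone rfl rfl, hx, hy, Matrix.one_apply_eq]
    ring
  rw [hmat, aux_det_submatrix] at hk
  have hdiag : Matrix.diagonal (fun _ : Fin n ⊕ Fin n => μ)
      = μ • (1 : Matrix (Fin n ⊕ Fin n) (Fin n ⊕ Fin n) ℂ) := by
    ext i j
    by_cases h : i = j <;> simp [h, Matrix.diagonal_apply, Matrix.one_apply]
  rw [hdiag] at hk
  -- Step 3 : eigenvector
  obtain ⟨v, hv0, hveq⟩ := Matrix.exists_mulVec_eq_zero_iff.mpr hk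
  have heig : Dk *ᵥ v = μ • v := by
    rw [Matrix.sub_mulVec, Matrix.smul_mulVec, Matrix.one_mulVec] at hveq
    exact (sub_eq_zero.mp hveq).symm
  -- Step 4 : real-matrix identities
  set G : Matrix (Fin n) (Fin n ⊕ Fin n) ℝ := (theta2 n)ᵀ * P with hGdef
  set F : Matrix (Fin n ⊕ Fin n) (Fin n ⊕ Fin n) ℝ := theta2 n * G with hFdef
  set S : Matrix (Fin n ⊕ Fin n) (Fin n ⊕ Fin n) ℝ := P * F with hSdef
  have hPt : Pᵀ = P := hPsymm
  have hFt : Fᵀ * P = S := by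
    rw [hFdef, hGdef, hSdef]
    simp [Matrix.transpose_mul, Matrix.transpose_transpose, hPt, Matrix.mul_assoc, hFdef, hGdef]
  have hGtG : Gᵀ * G = S := by
    rw [hGdef, hSdef]
    simp [Matrix.transpose_mul, Matrix.transpose_transpose, hPt, Matrix.mul_assoc,
      hFdef, hGdef]
  have hRic2 : P * A0 n αp αv + (A0 n αp αv)ᵀ * P = S - 1 := by
    have h1 : P * A0 n αp αv + (A0 n αp αv)ᵀ * P
        - (P * theta2 n * (theta2 n)ᵀ * P - 1) = 0 := by
      calc P * A0 n αp αv + (A0 n αp αv)ᵀ * P - (P * theta2 n * (theta2 n)ᵀ * P - 1)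
          = P * A0 n αp αv + (A0 n αp αv)ᵀ * P - P * theta2 n * (theta2 n)ᵀ * P + 1 := by
            abel
        _ = 0 := hRiccati
    rw [sub_eq_zero.mp h1]
    congr 1
    rw [hSdef, hFdef, hGdef]
    simp [Matrix.mul_assoc]
  -- Step 5 : complex Lyapunov identity
  have hBC2 : BC = ((a⁻¹ : ℝ) : ℂ) • F.map (Complex.ofReal ·) := by
    rw [hBCdef, hK', Matrix.mul_smul, aux_map_smul, hFdef, hGdef]
  have hDk2 : Dk = AC - (lam k * ((a⁻¹ : ℝ) : ℂ)) • F.map (Complex.ofReal ·) := by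
    rw [hDkdef, hBC2, smul_smul]
  set c : ℝ := 2 * (lam k).re * a⁻¹ - 1 with hcdef
  have hDkH : Dkᴴ = (A0 n αp αv)ᵀ.map (Complex.ofReal ·)
      - ((starRingEnd ℂ) (lam k) * ((a⁻¹ : ℝ) : ℂ)) • Fᵀ.map (Complex.ofReal ·) := by
    rw [hDk2, Matrix.conjTranspose_sub, Matrix.conjTranspose_smul, hACdef,
      aux_map_conjT, aux_map_conjT]
    congr 1
    simp [Complex.star_def, _root_.map_mul, Complex.conj_ofReal]
  have e1 : P.map (Complex.ofReal ·) * AC = (P * A0 n αp αv).map (Complex.ofReal ·) := by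
    rw [hACdef, aux_map_mul]
  have e2 : P.map (Complex.ofReal ·) * F.map (Complex.ofReal ·)
      = S.map (Complex.ofReal ·) := by
    rw [← aux_map_mul, hSdef]
  have e3 : (A0 n αp αv)ᵀ.map (Complex.ofReal ·) * P.map (Complex.ofReal ·)
      = ((A0 n αp αv)ᵀ * P).map (Complex.ofReal ·) := by
    rw [aux_map_mul]
  have e4 : Fᵀ.map (Complex.ofReal ·) * P.map (Complex.ofReal ·)
      = S.map (Complex.ofReal ·) := by
    rw [← aux_map_mul, hFt]
  have e5 : (P * A0 n αp αv).map (Complex.ofReal ·)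
      + ((A0 n αp αv)ᵀ * P).map (Complex.ofReal ·)
      = S.map (Complex.ofReal ·) - 1 := by
    rw [← aux_map_add, hRic2, aux_map_sub, aux_map_one]
  have key : P.map (Complex.ofReal ·) * Dk + Dkᴴ * P.map (Complex.ofReal ·)
      = -1 - ((c : ℝ) : ℂ) • S.map (Complex.ofReal ·) := by
    rw [hDkH, hDk2, Matrix.mul_sub, Matrix.sub_mul, Matrix.mul_smul, Matrix.smul_mul,
      e1, e2, e3, e4]
    have hz : lam k + (starRingEnd ℂ) (lam k) = ((2 * (lam k).re : ℝ) : ℂ) :=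
      Complex.add_conj _
    have hco : ((c : ℝ) : ℂ) = ((2 * (lam k).re : ℝ) : ℂ) * ((a⁻¹ : ℝ) : ℂ) - 1 := by
      rw [hcdef]; push_cast; ring
    calc (P * A0 n αp αv).map (Complex.ofReal ·)
          - (lam k * ((a⁻¹ : ℝ) : ℂ)) • S.map (Complex.ofReal ·)
          + (((A0 n αp αv)ᵀ * P).map (Complex.ofReal ·)
            - ((starRingEnd ℂ) (lam k) * ((a⁻¹ : ℝ) : ℂ)) • S.map (Complex.ofReal ·))
        = ((P * A0 n αp αv).map (Complex.ofReal ·)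
            + ((A0 n αp αv)ᵀ * P).map (Complex.ofReal ·))
          - ((lam k + (starRingEnd ℂ) (lam k)) * ((a⁻¹ : ℝ) : ℂ))
              • S.map (Complex.ofReal ·) := by
          rw [add_mul, add_smul]; abel
      _ = S.map (Complex.ofReal ·) - 1
          - (((2 * (lam k).re : ℝ) : ℂ) * ((a⁻¹ : ℝ) : ℂ)) • S.map (Complex.ofReal ·) := by
          rw [e5, hz]
      _ = -1 - ((c : ℝ) : ℂ) • S.map (Complex.ofReal ·) := by
          rw [hco, sub_smul, one_smul]; abel
  -- Step 6 : scalar computation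
  set q : ℂ := star v ⬝ᵥ P.map (Complex.ofReal ·) *ᵥ v with hqdef
  set t : ℂ := star v ⬝ᵥ S.map (Complex.ofReal ·) *ᵥ v with htdef
  have hs1 : star v ⬝ᵥ (P.map (Complex.ofReal ·) * Dk) *ᵥ v = μ * q := by
    rw [← Matrix.mulVec_mulVec, heig, Matrix.mulVec_smul, dotProduct_smul,
      smul_eq_mul, hqdef]
  have hs2 : star v ⬝ᵥ (Dkᴴ * P.map (Complex.ofReal ·)) *ᵥ v
      = (starRingEnd ℂ) μ * q := by
    rw [← Matrix.mulVec_mulVec, Matrix.dotProduct_mulVec, ← Matrix.star_mulVec, heig,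
      star_smul, smul_dotProduct, smul_eq_mul, hqdef]
    rfl
  have hsum := congrArg (fun M : Matrix (Fin n ⊕ Fin n) (Fin n ⊕ Fin n) ℂ =>
    star v ⬝ᵥ M *ᵥ v) key
  simp only [Matrix.add_mulVec, Matrix.sub_mulVec, Matrix.neg_mulVec,
    dotProduct_add, dotProduct_sub, dotProduct_neg,
    Matrix.smul_mulVec, dotProduct_smul, Matrix.one_mulVec,
    smul_eq_mul] at hsum
  rw [hs1, hs2] at hsum
  have hcomb : μ * q + (starRingEnd ℂ) μ * q = ((2 * μ.re : ℝ) : ℂ) * q := by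
    rw [← add_mul, Complex.add_conj]
  rw [hcomb] at hsum
  have hre := congrArg Complex.re hsum
  simp only [Complex.re_ofReal_mul, Complex.sub_re, Complex.neg_re] at hre
  -- positivity facts
  have hposQ : 0 < q.re := by
    have := (aux_posDef_map hPpos).re_dotProduct_pos hv0
    simpa [RCLike.re_to_complex, hqdef] using this
  have hposN : 0 < (star v ⬝ᵥ v).re := by
    have h1 : (1 : Matrix (Fin n ⊕ Fin n) (Fin n ⊕ Fin n) ℂ).PosDef := Matrix.PosDef.one
    have := h1.re_dotProduct_pos hv0
    simpa [Matrix.one_mulVec, RCLike.re_to_complex] using this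
  have hposT : 0 ≤ t.re := by
    have hps : (S.map (Complex.ofReal ·)).PosSemidef := by
      have hmm : S.map (Complex.ofReal ·)
          = (G.map (Complex.ofReal ·))ᴴ * (G.map (Complex.ofReal ·)) := by
        rw [aux_map_conjT, ← aux_map_mul, hGtG]
      rw [hmm]
      exact Matrix.posSemidef_conjTranspose_mul_self _
    have := hps.re_dotProduct_nonneg v
    simpa [RCLike.re_to_complex, htdef] using this
  have hc1 : 1 ≤ c := by
    have h2 : a ≤ (lam k).re := hmin k
    have h3 : 1 ≤ (lam k).re * a⁻¹ := by
      rw [← div_eq_mul_inv, le_div_iff₀ ha]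
      linarith
    rw [hcdef]
    nlinarith
  -- conclusion
  by_contra hcon
  push_neg at hcon
  nlinarith [mul_nonneg hcon hposQ.le, mul_nonneg (by linarith : (0:ℝ) ≤ c) hposT]

end
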